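/- Let a_1(x) ≤ a_2(x) ≤ ... ≤ a_n(x) be continuous real-valued functions on a connected topological space M, and suppose there is a function γ : [0,1) → ℝ such that for all x ∈ M and all t ∈ [0,1), ∏_{i=1}^n (1 + t·a_i(x)) = γ(t). Then each a_i is a constant function on M. -/

import Mathlib

open Set Polynomial

/-- If continuous ordered functions `a 1 ≤ … ≤ a n` on a connected space `M` are such that
`∏ i, (1 + t * a i x)` is independent of `x` for every `t ∈ [0,1)`, then each `a i` is constant. -/
theorem stmt_0 {M : Type*} [TopologicalSpace M] [ConnectedSpace M] [Nonempty M]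
    {n : ℕ} (a : Fin n → M → ℝ) (hcont : ∀ i, Continuous (a i))
    (hord : ∀ (x : M) (i j : Fin n), i ≤ j → a i x ≤ a j x)
    (γ : ℝ → ℝ)
    (hγ : ∀ x : M, ∀ t ∈ Ico (0 : ℝ) 1, ∏ i, (1 + t * a i x) = γ t) :
    ∀ (i : Fin n) (x y : M), a i x = a i y := by
  intro i x y
  -- the "reversed" polynomials
  have key : ∀ z : M, ∀ t : ℝ, 1 < t →
      (∏ j, (X + C (a j z))).eval t = t ^ n * γ (1 / t) := by
    intro z t ht
    have h0 : (0 : ℝ) < t := lt_trans one_pos ht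
    have h1 : 1 / t ∈ Ico (0 : ℝ) 1 :=
      ⟨by positivity, by rw [div_lt_one h0]; exact ht⟩
    rw [← hγ z (1 / t) h1, eval_prod]
    have hpow : t ^ n = ∏ _j : Fin n, t := by simp
    rw [hpow, ← Finset.prod_mul_distrib]
    refine Finset.prod_congr rfl fun j _ => ?_
    simp only [eval_add, eval_X, eval_C]
    field_simp
  have hinf : {t : ℝ | (∏ j, (X + C (a j x))).eval t = (∏ j, (X + C (a j y))).eval t}.Infinite := by
    apply Set.Infinite.mono _ (Set.Ioi_infinite (1 : ℝ))
    intro t ht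
    simp only [Set.mem_setOf_eq]
    rw [key x t ht, key y t ht]
  have hpq : (∏ j, (X + C (a j x))) = ∏ j, (X + C (a j y)) :=
    Polynomial.eq_of_infinite_eval_eq _ _ hinf
  have hne : ∀ z : M, (∏ j, (X + C (a j z))) ≠ 0 := by
    intro z
    apply Finset.prod_ne_zero_iff.2
    intro j _
    exact X_add_C_ne_zero (a j z)
  have hroots : ∀ z : M, (∏ j, (X + C (a j z))).roots
      = ((List.ofFn fun j => -a j z : List ℝ) : Multiset ℝ) := by
    intro z
    rw [Polynomial.roots_prod _ _ (hne z)]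
    simp only [show ∀ r : ℝ, X + C r = X - C (-r) from fun r => by rw [map_neg, sub_neg_eq_add],
      roots_X_sub_C]
    rw [Multiset.bind_singleton]
    simp [Multiset.map_coe, List.map_ofFn, Fin.univ_def, List.ofFn_eq_map, Function.comp_def]
  have hms : ((List.ofFn fun j => a j x : List ℝ) : Multiset ℝ)
      = ((List.ofFn fun j => a j y : List ℝ) : Multiset ℝ) := by
    have h1 := (hroots x).symm.trans (by rw [hpq, hroots y])
    have h2 := congrArg (Multiset.map (fun r : ℝ => -r)) h1
    simpa [Multiset.map_coe, List.map_ofFn, Function.comp_def, neg_neg] using h2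
  have hlist : (List.ofFn fun j => a j x) = (List.ofFn fun j => a j y) := by
    have hperm : List.Perm (List.ofFn fun j => a j x) (List.ofFn fun j => a j y) :=
      Multiset.coe_eq_coe.1 hms
    exact List.Perm.eq_of_sortedLE
      (List.sortedLE_ofFn_iff.2 fun i j hij => hord x i j hij)
      (List.sortedLE_ofFn_iff.2 fun i j hij => hord y i j hij) hperm
  have := List.ofFn_inj.1 hlist
  exact congrFun this i
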